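/- Let g : 2^Ω → ℝ₊ be a nonnegative submodular function, let OPT ⊆ Ω, and let ĝ be the Lovász extension of g. Then for every vector y ∈ [0,1]^Ω with y_e ≤ 1 − c for all e ∈ Ω (where c ∈ [0,1]), it holds that ĝ(y ∨ 1_{OPT}) ≥ c · g(OPT), where (y ∨ 1_{OPT})_e = max(y_e, [e ∈ OPT]). -/

import Mathlib

/-- `ĝ(y ∨ 1_OPT) ≥ c · g(OPT)` when all coordinates of `y` are at most `1 - c`. -/
theorem stmt_5 {Ω : Type*} [Fintype Ω] [DecidableEq Ω] (g : Finset Ω → ℝ)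
    (hg : ∀ A : Finset Ω, 0 ≤ g A)
    (hsub : ∀ A B : Finset Ω, g A + g B ≥ g (A ∪ B) + g (A ∩ B))
    (OPT : Finset Ω) (c : ℝ) (hc : c ∈ Set.Icc (0:ℝ) 1)
    (y : Ω → ℝ) (hy : ∀ e, y e ∈ Set.Icc (0:ℝ) 1) (hyc : ∀ e, y e ≤ 1 - c) :
    (∫ lam in (0:ℝ)..1,
        g (Finset.univ.filter
            (fun e => lam ≤ max (y e) (if e ∈ OPT then (1:ℝ) else 0))))
      ≥ c * g OPT := by
  set t : Ω → ℝ := fun e => max (y e) (if e ∈ OPT then (1:ℝ) else 0) with ht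
  set F : ℝ → ℝ := fun lam => g (Finset.univ.filter (fun e => lam ≤ t e)) with hF
  have hmeasS : ∀ S : Finset Ω,
      MeasurableSet {lam : ℝ | Finset.univ.filter (fun e => lam ≤ t e) = S} := by
    intro S
    have : {lam : ℝ | Finset.univ.filter (fun e => lam ≤ t e) = S}
        = ⋂ e : Ω, {lam : ℝ | e ∈ S ↔ lam ≤ t e} := by
      ext lam
      simp only [Set.mem_setOf_eq, Set.mem_iInter, Finset.ext_iff, Finset.mem_filter,
        Finset.mem_univ, true_and]
      constructor
      · intro h e; exact (h e).symm
      · intro h e; exact (h e).symm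
    rw [this]
    refine MeasurableSet.iInter fun e => ?_
    by_cases he : e ∈ S
    · simp only [he, true_iff]
      exact measurableSet_Iic
    · simp only [he, false_iff]
      exact (measurableSet_Iic (a := t e)).compl
  have hmeas : Measurable F := by
    have hFeq : F = fun lam => ∑ S : Finset Ω,
        if Finset.univ.filter (fun e => lam ≤ t e) = S then g S else 0 := by
      funext lam
      rw [Finset.sum_ite_eq (Finset.univ) (Finset.univ.filter (fun e => lam ≤ t e))]
      simp [hF]
    rw [hFeq]
    refine Finset.measurable_sum _ fun S _ => ?_
    exact Measurable.ite (hmeasS S) measurable_const measurable_const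
  have hbound : ∀ lam, ‖F lam‖ ≤ ∑ S : Finset Ω, ‖g S‖ := by
    intro lam
    exact Finset.single_le_sum (f := fun S => ‖g S‖) (fun S _ => norm_nonneg _)
      (Finset.mem_univ _)
  have hint : ∀ a b : ℝ, IntervalIntegrable F MeasureTheory.volume a b := by
    intro a b
    rw [intervalIntegrable_iff]
    haveI : MeasureTheory.IsFiniteMeasure (MeasureTheory.volume.restrict (Set.uIoc a b)) := by
      constructor
      rw [MeasureTheory.Measure.restrict_apply_univ, Set.uIoc, Real.volume_Ioc]
      exact ENNReal.ofReal_lt_top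
    exact (MeasureTheory.integrable_const _).mono'
      (hmeas.aestronglyMeasurable.restrict) (Filter.Eventually.of_forall hbound)
  have hc0 : (0:ℝ) ≤ c := hc.1
  have hc1 : c ≤ 1 := hc.2
  have h1c : (1:ℝ) - c ≤ 1 := by linarith
  have h0c : (0:ℝ) ≤ 1 - c := by linarith
  have hsplit : (∫ lam in (0:ℝ)..1, F lam)
      = (∫ lam in (0:ℝ)..(1-c), F lam) + ∫ lam in (1-c:ℝ)..1, F lam :=
    (intervalIntegral.integral_add_adjacent_intervals (hint 0 (1-c)) (hint (1-c) 1)).symm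
  have hnn : (0:ℝ) ≤ ∫ lam in (0:ℝ)..(1-c), F lam :=
    intervalIntegral.integral_nonneg h0c (fun x _ => hg _)
  have hEq : Set.EqOn F (fun _ => g OPT) (Set.Ioc (1-c) 1) := by
    intro lam hlam
    have hlam1 : 1 - c < lam := hlam.1
    have hlam2 : lam ≤ 1 := hlam.2
    have : Finset.univ.filter (fun e => lam ≤ t e) = OPT := by
      ext e
      simp only [Finset.mem_filter, Finset.mem_univ, true_and, ht]
      by_cases he : e ∈ OPT
      · simp only [he, if_pos, iff_true]
        exact le_max_of_le_right hlam2
      · simp only [he, if_neg, not_false_iff, iff_false]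
        have : max (y e) 0 = y e := max_eq_left (hy e).1
        rw [this]
        exact not_le.mpr (lt_of_le_of_lt (hyc e) hlam1)
    simp [hF, this]
  have hsecond : (∫ lam in (1-c:ℝ)..1, F lam) = c * g OPT := by
    rw [intervalIntegral.integral_of_le h1c,
      MeasureTheory.setIntegral_congr_fun measurableSet_Ioc hEq]
    rw [MeasureTheory.setIntegral_const, smul_eq_mul, Real.volume_real_Ioc_of_le h1c,
      show (1:ℝ) - (1-c) = c by ring]
  calc (∫ lam in (0:ℝ)..1, F lam)
      = (∫ lam in (0:ℝ)..(1-c), F lam) + ∫ lam in (1-c:ℝ)..1, F lam := hsplit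
    _ ≥ 0 + c * g OPT := by rw [hsecond]; linarith
    _ = c * g OPT := by ring
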